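/- There exists a digraph G with sub-digraph G' and a discrete Morse function f on G such that some allowed elementary path is critical in (G', f|_{G'}) but not critical in (G, f). Concretely, take V = {v_0,v_1,v_2}, G with edges {v_0→v_1, v_1→v_2, v_0→v_2}, f(v_1) = 0, f(v_0) = 1, f(v_2) = 2, and G' with edges {v_0→v_1, v_1→v_2}; then α = v_0 v_1 v_2 is critical in G' but not in G. -/

import Mathlib

/-- A digraph: a vertex set together with an irreflexive edge relation supported on the
vertex set (edges are ordered pairs off the diagonal). -/
structure DiGraph (V : Type) where
  verts : Set V
  Edge : V → V → Prop
  edge_mem_left : ∀ u v, Edge u v → u ∈ verts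
  edge_mem_right : ∀ u v, Edge u v → v ∈ verts
  edge_ne : ∀ u v, Edge u v → u ≠ v

variable {V : Type}

/-- An allowed elementary path: a nonempty list of vertices of `G` such that each
consecutive pair is a directed edge of `G`. -/
def IsAllowed (G : DiGraph V) (p : List V) : Prop :=
  p ≠ [] ∧ (∀ v ∈ p, v ∈ G.verts) ∧ p.Chain' G.Edge

/-- `Del p q` : `p` is obtained from `q` by deleting one vertex. -/
def Del (p q : List V) : Prop := ∃ i < q.length, p = q.eraseIdx i

/-- Value of a function on vertices extended to a path: the sum over its vertices. -/
def fval (f : V → ℝ) (p : List V) : ℝ := (p.map f).sum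

/-- A discrete Morse function on a digraph `G`: a nonnegative function on vertices such
that for every allowed elementary path `p` there is (i) at most one allowed elementary
path obtained from `p` by deleting one vertex with the same `f`-value, and (ii) at most
one allowed elementary path obtained from `p` by inserting one vertex with the same
`f`-value. -/
def IsMorse (G : DiGraph V) (f : V → ℝ) : Prop :=
  (∀ v, 0 ≤ f v) ∧
  ∀ p, IsAllowed G p →
    ((∀ β β', IsAllowed G β → Del β p → fval f β = fval f p →
        IsAllowed G β' → Del β' p → fval f β' = fval f p → β = β') ∧
     (∀ α α', IsAllowed G α → Del p α → fval f α = fval f p →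
        IsAllowed G α' → Del p α' → fval f α' = fval f p → α = α'))

/-- An allowed elementary path is critical if no allowed path obtained by deleting one
vertex has the same `f`-value, and no allowed path obtained by inserting one vertex has
the same `f`-value. -/
def IsCritical (G : DiGraph V) (f : V → ℝ) (p : List V) : Prop :=
  (¬ ∃ β, IsAllowed G β ∧ Del β p ∧ fval f β = fval f p) ∧
  (¬ ∃ α, IsAllowed G α ∧ Del p α ∧ fval f α = fval f p)

/-- A directed loop: an allowed elementary path `v₀ v₁ ⋯ vₙ v₀` with `n ≥ 1`. -/
def IsLoop (G : DiGraph V) (p : List V) : Prop :=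
  IsAllowed G p ∧ 3 ≤ p.length ∧ p.head? = p.getLast?

/-- A simplicial allowed elementary path: all vertices distinct. -/
def Simplicial (G : DiGraph V) (p : List V) : Prop := IsAllowed G p ∧ p.Nodup

/-- A pair of the combinatorial discrete gradient vector field `M(G,f)`:
`β` is obtained from `α` by inserting one vertex, and `f(α) = f(β)`. -/
def MPair (G : DiGraph V) (f : V → ℝ) (α β : List V) : Prop :=
  IsAllowed G α ∧ IsAllowed G β ∧ Del α β ∧ fval f α = fval f β

/-- `H` is a sub-digraph of `G`. -/
def Subdigraph (H G : DiGraph V) : Prop :=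
  H.verts ⊆ G.verts ∧ ∀ u v, H.Edge u v → G.Edge u v

/-- The digraph of Example 2: vertices `{v₀,v₁,v₂}`, edges `{v₀→v₁, v₁→v₂, v₀→v₂}`. -/
def G12 : DiGraph (Fin 3) where
  verts := Set.univ
  Edge a b := (a = 0 ∧ b = 1) ∨ (a = 1 ∧ b = 2) ∨ (a = 0 ∧ b = 2)
  edge_mem_left := fun _ _ _ => trivial
  edge_mem_right := fun _ _ _ => trivial
  edge_ne := by decide

/-- The sub-digraph `G'` of Example 2: edges `{v₀→v₁, v₁→v₂}`. -/
def G12' : DiGraph (Fin 3) where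
  verts := Set.univ
  Edge a b := (a = 0 ∧ b = 1) ∨ (a = 1 ∧ b = 2)
  edge_mem_left := fun _ _ _ => trivial
  edge_mem_right := fun _ _ _ => trivial
  edge_ne := by decide

/-- The Morse function of Example 2: `f(v₀)=1, f(v₁)=0, f(v₂)=2`. -/
noncomputable def f12 : Fin 3 → ℝ := ![1, 0, 2]

/-- There is a digraph `G` with sub-digraph `G'` and a discrete Morse
function `f` on `G` such that the path `α = v₀v₁v₂` is critical in `(G', f|_{G'})` but
not critical in `(G, f)`. -/
lemma chain_len (p : List (Fin 3)) (h : p.Chain' G12.Edge) : p.length ≤ 3 := by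
  have h2 : p.Chain' (· < ·) := h.imp (fun {a b} hab => by
    fin_cases a <;> fin_cases b <;> simp_all [G12])
  have := (List.isChain_iff_pairwise.mp h2).nodup
  simpa using this.length_le_card

lemma chain_len' (p : List (Fin 3)) (h : p.Chain' G12'.Edge) : p.length ≤ 3 := by
  refine chain_len p (h.imp (fun {a b} hab => ?_))
  fin_cases a <;> fin_cases b <;> simp_all [G12, G12']

lemma allowed7 (p : List (Fin 3)) (hp : IsAllowed G12 p) :
    p ∈ [[0],[1],[2],[0,1],[1,2],[0,2],[0,1,2]] := by
  obtain ⟨hne, -, hch⟩ := hp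
  have hl := chain_len p hch
  match p, hne with
  | [a], _ =>
    revert hch; show List.Chain' G12.Edge [a] → _
    simp only [G12, List.Chain', List.isChain_singleton]
    revert a; decide
  | [a,b], _ =>
    revert hch; show List.Chain' G12.Edge [a,b] → _
    simp only [G12, List.Chain', List.isChain_cons_cons, List.isChain_singleton]
    revert a b; decide
  | [a,b,c], _ =>
    revert hch; show List.Chain' G12.Edge [a,b,c] → _
    simp only [G12, List.Chain', List.isChain_cons_cons, List.isChain_singleton]
    revert a b c; decide
  | a::b::c::d::rest, _ => simp at hl; omega

lemma allowed7' (p : List (Fin 3)) (hp : IsAllowed G12' p) :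
    p ∈ [[0],[1],[2],[0,1],[1,2],[0,1,2]] := by
  obtain ⟨hne, -, hch⟩ := hp
  have hl := chain_len' p hch
  match p, hne with
  | [a], _ =>
    revert hch; show List.Chain' G12'.Edge [a] → _
    simp only [G12', List.Chain', List.isChain_singleton]
    revert a; decide
  | [a,b], _ =>
    revert hch; show List.Chain' G12'.Edge [a,b] → _
    simp only [G12', List.Chain', List.isChain_cons_cons, List.isChain_singleton]
    revert a b; decide
  | [a,b,c], _ =>
    revert hch; show List.Chain' G12'.Edge [a,b,c] → _
    simp only [G12', List.Chain', List.isChain_cons_cons, List.isChain_singleton]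
    revert a b c; decide
  | a::b::c::d::rest, _ => simp at hl; omega

theorem critical_in_sub_not_in_ambient :
    IsMorse G12 f12 ∧ Subdigraph G12' G12 ∧
    IsCritical G12' f12 [0, 1, 2] ∧ ¬ IsCritical G12 f12 [0, 1, 2] := by
  refine ⟨?_, ?_, ?_, ?_⟩
  · constructor
    · intro v; fin_cases v <;> norm_num [f12]
    · intro p hp
      have hp7 := allowed7 p hp
      constructor
      · intro β β' hβ dβ eβ hβ' dβ' eβ'
        obtain ⟨i, hi, rfl⟩ := dβ
        obtain ⟨j, hj, rfl⟩ := dβ'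
        fin_cases hp7 <;>
          simp only [List.length_cons, List.length_nil, Nat.zero_add] at hi hj <;>
          interval_cases i <;> interval_cases j <;>
          simp_all [fval, f12, List.eraseIdx, IsAllowed]
      · intro α α' hα dα eα hα' dα' eα'
        have hα7 := allowed7 α hα
        have hα7' := allowed7 α' hα'
        obtain ⟨i, hi, hpi⟩ := dα
        obtain ⟨j, hj, hpj⟩ := dα'
        subst hpi
        fin_cases hα7 <;> fin_cases hα7' <;>
          simp only [List.length_cons, List.length_nil, Nat.zero_add] at hi hj <;>
          interval_cases i <;> interval_cases j <;>
          simp_all [fval, f12, List.eraseIdx]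
  · exact ⟨fun _ _ => trivial, fun u v h => Or.elim h Or.inl (Or.inr ∘ Or.inl)⟩
  · constructor
    · rintro ⟨β, hβ, ⟨i, hi, rfl⟩, e⟩
      simp only [List.length_cons, List.length_nil, Nat.zero_add] at hi
      have hch := hβ.2.2
      interval_cases i <;>
        simp_all [fval, f12, List.eraseIdx, G12', List.Chain', List.isChain_cons_cons]
    · rintro ⟨α, hα, ⟨i, hi, hp⟩, e⟩
      have hl := chain_len' α hα.2.2
      have h3 : ([0,1,2] : List (Fin 3)).length = (α.eraseIdx i).length := by rw [← hp]
      rw [List.length_eraseIdx, if_pos hi] at h3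
      simp at h3
      omega
  · intro hc
    exact hc.1 ⟨[0,2], ⟨by simp, fun _ _ => trivial, by simp [G12, List.Chain', List.isChain_cons_cons]⟩,
      ⟨1, by norm_num, rfl⟩, by norm_num [fval, f12]⟩
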